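/- Let (n, ⟨·,·⟩, φ) be of modified H-type and let T : z → z be the unique linear map with ⟨T z, z'⟩ = B_φ(z, z') for all z, z' ∈ z. Let z ∈ z and x ∈ v be nonzero with ⟨x, x⟩ ≠ 0. Then the linear span of {z, x, j(z)x} is a Lie subalgebra of n if and only if T z is a scalar multiple of z (i.e. z is an eigenvector of T or T z = 0). -/

import Mathlib

theorem modified_H_type_totally_geodesic_subalgebra
    {n : Type*} [LieRing n] [LieAlgebra ℝ n] [FiniteDimensional ℝ n]
    (B : LinearMap.BilinForm ℝ n)
    (hBsymm : ∀ a b : n, B a b = B b a)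
    (hBnd : B.Nondegenerate)
    (Z : Submodule ℝ n)
    (hZ : Z = LieSubmodule.toSubmodule (LieAlgebra.center ℝ n))
    (h2step : ∀ a b : n, ⁅a, b⁆ ∈ Z)
    (V : Submodule ℝ n)
    (hV : V = B.orthogonal Z)
    (hZnd : (B.restrict Z).Nondegenerate)
    (hVnd : (B.restrict V).Nondegenerate)
    (j : Z →ₗ[ℝ] V →ₗ[ℝ] V)
    (hj : ∀ (z : Z) (x y : V), B ⁅(x : n), (y : n)⁆ (z : n) = B (y : n) ((j z x : V) : n))
    (φ : QuadraticForm ℝ Z)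
    (hH : ∀ z : Z, (j z) ∘ₗ (j z) = (-(φ z)) • (LinearMap.id : V →ₗ[ℝ] V))
    (T : Z →ₗ[ℝ] Z)
    (hT : ∀ a b : Z, B ((T a : Z) : n) ((b : Z) : n) = (φ (a + b) - φ a - φ b) / 2)
    (z : Z) (x : V) (hz : z ≠ 0) (hx : x ≠ 0) (hxx : B (x : n) (x : n) ≠ 0) :
    (∀ a ∈ Submodule.span ℝ ({(z : n), (x : n), ((j z x : V) : n)} : Set n),
        ∀ b ∈ Submodule.span ℝ ({(z : n), (x : n), ((j z x : V) : n)} : Set n),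
          ⁅a, b⁆ ∈ Submodule.span ℝ ({(z : n), (x : n), ((j z x : V) : n)} : Set n)) ↔
      (∃ c : ℝ, T z = c • z) := by
  set S : Submodule ℝ n := Submodule.span ℝ ({(z : n), (x : n), ((j z x : V) : n)} : Set n) with hS
  -- centrality of Z elements
  have hcent : ∀ (w : Z) (a : n), ⁅a, (w : n)⁆ = 0 := by
    intro w a
    have hmem : (w : n) ∈ LieSubmodule.toSubmodule (LieAlgebra.center ℝ n) := by
      rw [← hZ]; exact w.2
    exact hmem a
  have hcent' : ∀ (w : Z) (a : n), ⁅(w : n), a⁆ = 0 := by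
    intro w a
    rw [← lie_skew, hcent, neg_zero]
  -- skew-adjointness
  have hskew : ∀ (w : Z) (a b : V), B ((j w a : V) : n) (b : n) = - B (a : n) ((j w b : V) : n) := by
    intro w a b
    have h1 := hj w a b
    have h2 := hj w b a
    have h3 : B ⁅(b : n), (a : n)⁆ (w : n) = - B ⁅(a : n), (b : n)⁆ (w : n) := by
      have hbr : ⁅(b : n), (a : n)⁆ = -⁅(a : n), (b : n)⁆ := by rw [← lie_skew]
      rw [hbr, map_neg, LinearMap.neg_apply]
    rw [h1, h2] at h3
    rw [hBsymm]
    linarith [h3]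
  -- anticommutator
  have hac : ∀ (z' : Z) (a : V), j z (j z' a) + j z' (j z a) = (-(φ (z + z') - φ z - φ z')) • a := by
    intro z' a
    have h1 := LinearMap.congr_fun (hH (z + z')) a
    have h2 := LinearMap.congr_fun (hH z) a
    have h3 := LinearMap.congr_fun (hH z') a
    simp only [LinearMap.comp_apply, LinearMap.smul_apply, LinearMap.id_apply, map_add,
      LinearMap.add_apply] at h1 h2 h3
    have : j z (j z a) + (j z (j z' a) + j z' (j z a)) + j z' (j z' a)
        = (-(φ (z + z'))) • a := by
      rw [← h1]; abel
    rw [h2, h3] at this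
    have h4 : j z (j z' a) + j z' (j z a)
        = (-(φ (z + z'))) • a - (-(φ z)) • a - (-(φ z')) • a := by
      rw [← this]; abel
    rw [h4, ← sub_smul, ← sub_smul]
    congr 1
    ring
  -- key bracket formula
  have hkey : ⁅(x : n), ((j z x : V) : n)⁆ = (B (x : n) (x : n)) • ((T z : Z) : n) := by
    have hmem : ⁅(x : n), ((j z x : V) : n)⁆ ∈ Z := h2step _ _
    set w : Z := ⟨⁅(x : n), ((j z x : V) : n)⁆, hmem⟩ with hw
    have hBjj : ∀ z' : Z, B ((j z x : V) : n) ((j z' x : V) : n)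
        = B ((T z : Z) : n) ((z' : Z) : n) * B (x : n) (x : n) := by
      intro z'
      have e1 : B ((j z x : V) : n) ((j z' x : V) : n)
          = - B (x : n) ((j z' (j z x) : V) : n) := by
        rw [hBsymm]; exact hskew z' x (j z x)
      have e2 : (j z' (j z x) : V) = (-(φ (z + z') - φ z - φ z')) • x - j z (j z' x) := by
        have := hac z' x
        rw [← this]; abel
      have e3 : B (x : n) ((j z (j z' x) : V) : n)
          = - B ((j z x : V) : n) ((j z' x : V) : n) := by
        rw [hBsymm]
        rw [hskew z (j z' x) x, hBsymm]
      rw [e2] at e1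
      have e4 : (((-(φ (z + z') - φ z - φ z')) • x - j z (j z' x) : V) : n)
          = (-(φ (z + z') - φ z - φ z')) • (x : n) - ((j z (j z' x) : V) : n) := by
        simp
      rw [e4, map_sub, map_smul] at e1
      rw [e3] at e1
      have e5 : B ((j z x : V) : n) ((j z' x : V) : n)
          = (φ (z + z') - φ z - φ z') / 2 * B (x : n) (x : n) := by
        simp only [LinearMap.smul_apply, smul_eq_mul] at e1
        linarith [e1]
      rw [e5, hT z z']
    have hzero : w - (B (x : n) (x : n)) • T z = 0 := by
      apply hZnd.1
      intro z'
      have hr : (B.restrict Z) (w - (B (x : n) (x : n)) • T z) z'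
          = B ((w : Z) : n) ((z' : Z) : n) - B (x : n) (x : n) * B ((T z : Z) : n) ((z' : Z) : n) := by
        simp [LinearMap.BilinForm.restrict_apply, map_sub, smul_eq_mul]
      rw [hr]
      have hw1 : B ((w : Z) : n) ((z' : Z) : n) = B ((j z x : V) : n) ((j z' x : V) : n) := by
        rw [hw]
        exact hj z' x (j z x)
      rw [hw1, hBjj z']
      ring
    have : w = (B (x : n) (x : n)) • T z := by
      have := sub_eq_zero.mp hzero; exact this
    have hcoe := congrArg (Subtype.val) this
    simpa using hcoe
  -- Z ∩ V = 0
  have hZV : ∀ a : n, a ∈ Z → a ∈ V → a = 0 := by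
    intro a haZ haV
    have h0 : (⟨a, haZ⟩ : Z) = 0 := by
      apply hZnd.1
      intro b
      have : B a (b : n) = 0 := by
        rw [hBsymm]
        rw [hV] at haV
        exact (LinearMap.BilinForm.mem_orthogonal_iff.mp haV) (b : n) b.2
      simpa [LinearMap.BilinForm.restrict_apply] using this
    exact congrArg Subtype.val h0
  constructor
  · intro h
    have hmemx : (x : n) ∈ S := Submodule.subset_span (by simp)
    have hmemjx : ((j z x : V) : n) ∈ S := Submodule.subset_span (by simp)
    have hbr : ⁅(x : n), ((j z x : V) : n)⁆ ∈ S := h _ hmemx _ hmemjx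
    rw [hkey] at hbr
    rw [hS, show ({(z : n), (x : n), ((j z x : V) : n)} : Set n)
        = insert (z : n) {(x : n), ((j z x : V) : n)} from rfl] at hbr
    obtain ⟨a, w, hw, heq⟩ := Submodule.mem_span_insert.mp hbr
    obtain ⟨b, c, hbc⟩ := Submodule.mem_span_pair.mp hw
    have hwV : w ∈ V := by
      rw [← hbc]
      exact add_mem (Submodule.smul_mem _ _ x.2) (Submodule.smul_mem _ _ (j z x).2)
    have hwZ : w ∈ Z := by
      have : w = (B (x : n) (x : n)) • ((T z : Z) : n) - a • (z : n) := by
        rw [heq]; abel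
      rw [this]
      exact sub_mem (Submodule.smul_mem _ _ (T z).2) (Submodule.smul_mem _ _ z.2)
    have hw0 : w = 0 := hZV w hwZ hwV
    rw [hw0, add_zero] at heq
    refine ⟨a / B (x : n) (x : n), ?_⟩
    have hTz : (B (x : n) (x : n)) • T z = a • z := by
      apply Subtype.coe_injective
      simpa using heq
    have h5 : T z = (B (x : n) (x : n))⁻¹ • (a • z) := by
      rw [← hTz, smul_smul, inv_mul_cancel₀ hxx, one_smul]
    rw [h5, smul_smul, div_eq_inv_mul]
  · rintro ⟨c, hc⟩
    have hbr : ⁅(x : n), ((j z x : V) : n)⁆ ∈ S := by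
      rw [hkey, hc]
      have : ((c • z : Z) : n) = c • (z : n) := by simp
      rw [this, smul_smul]
      exact Submodule.smul_mem _ _ (Submodule.subset_span (by simp))
    have hgen : ∀ g ∈ ({(z : n), (x : n), ((j z x : V) : n)} : Set n),
        ∀ g' ∈ ({(z : n), (x : n), ((j z x : V) : n)} : Set n), ⁅g, g'⁆ ∈ S := by
      intro g hg g' hg'
      rcases hg with rfl | rfl | rfl <;> rcases hg' with rfl | rfl | rfl
      · rw [hcent']; exact S.zero_mem
      · rw [hcent']; exact S.zero_mem
      · rw [hcent']; exact S.zero_mem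
      · rw [hcent]; exact S.zero_mem
      · rw [lie_self]; exact S.zero_mem
      · exact hbr
      · rw [hcent]; exact S.zero_mem
      · rw [← lie_skew]; exact S.neg_mem hbr
      · rw [lie_self]; exact S.zero_mem
    have hgenS : ∀ g ∈ ({(z : n), (x : n), ((j z x : V) : n)} : Set n),
        ∀ b ∈ S, ⁅g, b⁆ ∈ S := by
      intro g hg b hb
      have hle : S ≤ Submodule.comap (LieAlgebra.ad ℝ n g) S := by
        rw [hS]
        apply Submodule.span_le.mpr
        intro g' hg'
        simp only [SetLike.mem_coe, Submodule.mem_comap, LieAlgebra.ad_apply]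
        exact hgen g hg g' hg'
      have := hle hb
      simpa [LieAlgebra.ad_apply] using this
    intro a ha b hb
    have hle : S ≤ Submodule.comap (-(LieAlgebra.ad ℝ n b)) S := by
      rw [hS]
      apply Submodule.span_le.mpr
      intro g hg
      simp only [SetLike.mem_coe, Submodule.mem_comap, LinearMap.neg_apply, LieAlgebra.ad_apply]
      have h1 := hgenS g hg b hb
      rw [← lie_skew] at h1
      exact h1
    have h2 := hle ha
    simp only [Submodule.mem_comap, LinearMap.neg_apply, LieAlgebra.ad_apply] at h2
    rwa [lie_skew] at h2
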